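/- Let d ≥ 1 and let μ : [0,∞) → M₊(ℝ^d) be a map with μ_0 = 0 which is continuous for the topology of weak convergence and nondecreasing. Then there exists a σ-finite positive Borel measure ν on [0,∞) × ℝ^d such that ν([0,t] × A) = μ_t(A) for every t ≥ 0 and every Borel set A ⊆ ℝ^d. -/

import Mathlib

open MeasureTheory Filter Topology
open scoped NNReal ENNReal

open Set
open scoped ProbabilityTheory

namespace MPAux

structure Hyp (μ : ℝ≥0 → FiniteMeasure ℝ) : Prop where
  h0 : μ 0 = 0
  hmass : Continuous fun t => (μ t).mass
  hmono : ∀ ⦃s t : ℝ≥0⦄, s ≤ t → ∀ A : Set ℝ, MeasurableSet A →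
    (μ s : Measure ℝ) A ≤ (μ t : Measure ℝ) A

variable {μ : ℝ≥0 → FiniteMeasure ℝ}

noncomputable def FA (μ : ℝ≥0 → FiniteMeasure ℝ) (A : Set ℝ) : ℝ → ℝ :=
  fun t => ((μ t.toNNReal : Measure ℝ) A).toReal

lemma FA_ne_top (t : ℝ≥0) (A : Set ℝ) : (μ t : Measure ℝ) A ≠ ∞ :=
  measure_ne_top _ _

lemma FA_nonneg (A : Set ℝ) (t : ℝ) : 0 ≤ FA μ A t := ENNReal.toReal_nonneg

lemma FA_mono (h : Hyp μ) {A : Set ℝ} (hA : MeasurableSet A) : Monotone (FA μ A) := by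
  intro s t hst
  exact ENNReal.toReal_mono (FA_ne_top _ _)
    (h.hmono (Real.toNNReal_le_toNNReal hst) A hA)

lemma FA_of_nonpos (h : Hyp μ) (A : Set ℝ) {t : ℝ} (ht : t ≤ 0) : FA μ A t = 0 := by
  simp [FA, Real.toNNReal_of_nonpos ht, h.h0]

lemma FA_union (h : Hyp μ) {A B : Set ℝ} (hA : MeasurableSet A) (hB : MeasurableSet B)
    (hd : Disjoint A B) (t : ℝ) : FA μ (A ∪ B) t = FA μ A t + FA μ B t := by
  simp only [FA]
  rw [measure_union hd hB, ENNReal.toReal_add (FA_ne_top _ _) (FA_ne_top _ _)]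

lemma mass_eq (t : ℝ≥0) : ((μ t).mass : ℝ) = ((μ t : Measure ℝ) univ).toReal := by
  rw [← ENNReal.coe_toReal, FiniteMeasure.ennreal_mass]

lemma FA_univ_continuous (h : Hyp μ) : Continuous (FA μ univ) := by
  have : (FA μ univ) = fun t : ℝ => ((μ t.toNNReal).mass : ℝ) := by
    funext t; rw [mass_eq]; rfl
  rw [this]
  exact NNReal.continuous_coe.comp (h.hmass.comp continuous_real_toNNReal)

lemma domination (h : Hyp μ) {A : Set ℝ} (hA : MeasurableSet A) {s t : ℝ≥0} (hst : s ≤ t) :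
    (μ t : Measure ℝ) A + (μ s : Measure ℝ) univ
      ≤ (μ s : Measure ℝ) A + (μ t : Measure ℝ) univ := by
  rw [← measure_add_measure_compl (μ := (μ s : Measure ℝ)) hA,
    ← measure_add_measure_compl (μ := (μ t : Measure ℝ)) hA, ← add_assoc, ← add_assoc,
    add_comm ((μ t : Measure ℝ) A) ((μ s : Measure ℝ) A)]
  exact add_le_add le_rfl (h.hmono hst Aᶜ hA.compl)

lemma FA_increment_le (h : Hyp μ) {A : Set ℝ} (hA : MeasurableSet A) {s t : ℝ} (hst : s ≤ t) :
    FA μ A t - FA μ A s ≤ FA μ univ t - FA μ univ s := by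
  have key := domination h hA (Real.toNNReal_le_toNNReal hst)
  have h1 := ENNReal.toReal_mono (by finiteness) key
  rw [ENNReal.toReal_add (FA_ne_top _ _) (FA_ne_top _ _),
    ENNReal.toReal_add (FA_ne_top _ _) (FA_ne_top _ _)] at h1
  simp only [FA]
  linarith

lemma FA_abs_le (h : Hyp μ) {A : Set ℝ} (hA : MeasurableSet A) (s t : ℝ) :
    |FA μ A t - FA μ A s| ≤ |FA μ univ t - FA μ univ s| := by
  rcases le_total s t with hst | hst
  · rw [abs_of_nonneg (by linarith [FA_mono h hA hst] : (0:ℝ) ≤ _),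
      abs_of_nonneg (by linarith [FA_mono h MeasurableSet.univ hst] : (0:ℝ) ≤ _)]
    exact FA_increment_le h hA hst
  · rw [abs_of_nonpos (by linarith [FA_mono h hA hst] : _ ≤ (0:ℝ)),
      abs_of_nonpos (by linarith [FA_mono h MeasurableSet.univ hst] : _ ≤ (0:ℝ))]
    simpa using FA_increment_le h hA hst

lemma FA_continuous (h : Hyp μ) {A : Set ℝ} (hA : MeasurableSet A) : Continuous (FA μ A) := by
  rw [continuous_iff_continuousAt]
  intro x
  have hg : Tendsto (fun t => |FA μ univ t - FA μ univ x|) (𝓝 x) (𝓝 0) := by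
    have := ((FA_univ_continuous h).tendsto x).sub (tendsto_const_nhds (x := FA μ univ x))
    simpa using this.abs
  have : Tendsto (fun t => dist (FA μ A t) (FA μ A x)) (𝓝 x) (𝓝 0) := by
    apply squeeze_zero (fun t => dist_nonneg) (fun t => ?_) hg
    rw [Real.dist_eq]
    exact FA_abs_le h hA x t
  rw [ContinuousAt, tendsto_iff_dist_tendsto_zero]
  exact this

noncomputable def SF (h : Hyp μ) {A : Set ℝ} (hA : MeasurableSet A) : StieltjesFunction ℝ where
  toFun := FA μ A
  mono' := FA_mono h hA
  right_continuous' := fun _ => ((FA_continuous h hA).continuousAt).continuousWithinAt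

@[simp] lemma SF_apply (h : Hyp μ) {A : Set ℝ} (hA : MeasurableSet A) (t : ℝ) :
    SF h hA t = FA μ A t := rfl

lemma SF_tendsto_atBot (h : Hyp μ) {A : Set ℝ} (hA : MeasurableSet A) :
    Tendsto (SF h hA) atBot (𝓝 0) := by
  apply Tendsto.congr' _ (tendsto_const_nhds (x := (0:ℝ)))
  filter_upwards [eventually_le_atBot (0:ℝ)] with t ht
  exact (FA_of_nonpos h A ht).symm

lemma SF_measure_Iic (h : Hyp μ) {A : Set ℝ} (hA : MeasurableSet A) (t : ℝ) :
    (SF h hA).measure (Iic t) = (μ t.toNNReal : Measure ℝ) A := by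
  rw [StieltjesFunction.measure_Iic _ (SF_tendsto_atBot h hA), sub_zero]
  exact ENNReal.ofReal_toReal (FA_ne_top _ _)

lemma SF_measure_add_of_union (h : Hyp μ) {A B C : Set ℝ} (hA : MeasurableSet A)
    (hB : MeasurableSet B) (hd : Disjoint A B) (hC : MeasurableSet C) (hCeq : C = A ∪ B) :
    (SF h hC).measure = (SF h hA).measure + (SF h hB).measure := by
  refine Measure.ext_of_Ioc _ _ (fun a b hab => ?_)
  rw [Measure.add_apply, StieltjesFunction.measure_Ioc, StieltjesFunction.measure_Ioc,
    StieltjesFunction.measure_Ioc]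
  simp only [SF_apply]
  subst hCeq
  rw [FA_union h hA hB hd, FA_union h hA hB hd, ← ENNReal.ofReal_add
      (sub_nonneg.mpr (FA_mono h hA hab.le)) (sub_nonneg.mpr (FA_mono h hB hab.le))]
  congr 1
  ring

lemma SF_measure_mono (h : Hyp μ) {A B : Set ℝ} (hA : MeasurableSet A) (hB : MeasurableSet B)
    (hAB : A ⊆ B) : (SF h hA).measure ≤ (SF h hB).measure := by
  have := SF_measure_add_of_union h hA (hB.diff hA) disjoint_sdiff_self_right hB
    (union_diff_cancel hAB).symm
  rw [this]
  exact Measure.le_add_right le_rfl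

noncomputable def rho (h : Hyp μ) : Measure ℝ := (SF h MeasurableSet.univ).measure

noncomputable def rhoq (h : Hyp μ) (q : ℚ) : Measure ℝ :=
  (SF h (measurableSet_Iic : MeasurableSet (Iic (q:ℝ)))).measure

instance (h : Hyp μ) : SigmaFinite (rho h) := by unfold rho; infer_instance
instance (h : Hyp μ) (q : ℚ) : SigmaFinite (rhoq h q) := by unfold rhoq; infer_instance

lemma rhoq_le_rho (h : Hyp μ) (q : ℚ) : rhoq h q ≤ rho h :=
  SF_measure_mono h _ _ (subset_univ _)

lemma rhoq_mono (h : Hyp μ) {q r : ℚ} (hqr : q ≤ r) : rhoq h q ≤ rhoq h r :=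
  SF_measure_mono h _ _ (Iic_subset_Iic.mpr (by exact_mod_cast hqr))

lemma rhoq_ac (h : Hyp μ) (q : ℚ) : rhoq h q ≪ rho h :=
  Measure.absolutelyContinuous_of_le (rhoq_le_rho h q)

noncomputable def rnD (h : Hyp μ) (q : ℚ) : ℝ → ℝ≥0∞ := (rhoq h q).rnDeriv (rho h)

lemma rnD_measurable (h : Hyp μ) (q : ℚ) : Measurable (rnD h q) :=
  Measure.measurable_rnDeriv _ _

lemma setInt (h : Hyp μ) (q : ℚ) (s : Set ℝ) :
    ∫⁻ x in s, rnD h q x ∂(rho h) = rhoq h q s :=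
  Measure.setLIntegral_rnDeriv (rhoq_ac h q) s

lemma rnD_mono (h : Hyp μ) : ∀ᵐ t ∂(rho h), ∀ q r : ℚ, q ≤ r → rnD h q t ≤ rnD h r t := by
  rw [ae_all_iff]
  intro q
  rw [ae_all_iff]
  intro r
  by_cases hqr : q ≤ r
  · have : rnD h q ≤ᵐ[rho h] rnD h r := by
      refine ae_le_of_forall_setLIntegral_le_of_sigmaFinite (rnD_measurable h q)
        fun s hs _ => ?_
      rw [setInt, setInt]
      exact rhoq_mono h hqr s
    filter_upwards [this] with t ht _
    exact ht
  · exact ae_of_all _ fun t hqr' => absurd hqr' hqr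

lemma rnD_le_one (h : Hyp μ) : ∀ᵐ t ∂(rho h), ∀ q : ℚ, rnD h q t ≤ 1 := by
  rw [ae_all_iff]
  exact fun q => Measure.rnDeriv_le_one_of_le (rhoq_le_rho h q)

lemma ae_of_ae_restrict_Ioc {P : ℝ → Prop} (ν : Measure ℝ)
    (hP : ∀ k : ℕ, ∀ᵐ x ∂ν.restrict (Ioc (-(k:ℝ)) k), P x) : ∀ᵐ x ∂ν, P x := by
  have hsub : {x | ¬ P x} ⊆ ⋃ k : ℕ, {x | ¬ P x} ∩ Ioc (-(k:ℝ)) k := by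
    intro x hx
    obtain ⟨k, hk⟩ := exists_nat_gt |x|
    exact mem_iUnion.mpr ⟨k, hx, by
      constructor
      · nlinarith [neg_abs_le x, abs_nonneg x]
      · nlinarith [le_abs_self x]⟩
  have hle : ν {x | ¬ P x} ≤ ∑' k : ℕ, ν ({x | ¬ P x} ∩ Ioc (-(k:ℝ)) k) :=
    (measure_mono hsub).trans (measure_iUnion_le _)
  have hz : ∀ k : ℕ, ν ({x | ¬ P x} ∩ Ioc (-(k:ℝ)) k) = 0 := by
    intro k
    have := hP k
    rw [ae_iff] at this
    rwa [Measure.restrict_apply' measurableSet_Ioc] at this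
  rw [ae_iff]
  simpa [hz] using hle

lemma SF_measure_Ioc_nat (h : Hyp μ) {A : Set ℝ} (hA : MeasurableSet A) (k : ℕ) :
    (SF h hA).measure (Ioc (-(k:ℝ)) (k:ℝ)) = (μ (k:ℝ≥0) : Measure ℝ) A := by
  rw [StieltjesFunction.measure_Ioc]
  simp only [SF_apply]
  rw [FA_of_nonpos h A (neg_nonpos.mpr (Nat.cast_nonneg k)), sub_zero]
  unfold FA
  have hk : (k:ℝ).toNNReal = (k:ℝ≥0) := by simp
  rw [hk, ENNReal.ofReal_toReal (FA_ne_top _ _)]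

lemma rho_decomp (h : Hyp μ) (q : ℚ) :
    rho h = rhoq h q + (SF h (measurableSet_Ioi : MeasurableSet (Ioi (q:ℝ)))).measure :=
  SF_measure_add_of_union h measurableSet_Iic measurableSet_Ioi
    (Iic_disjoint_Ioi le_rfl) MeasurableSet.univ (Iic_union_Ioi).symm

lemma rhoq_decomp (h : Hyp μ) {q r : ℚ} (hqr : q ≤ r) :
    rhoq h r = rhoq h q + (SF h (measurableSet_Ioc : MeasurableSet (Ioc (q:ℝ) (r:ℝ)))).measure :=
  SF_measure_add_of_union h measurableSet_Iic measurableSet_Ioc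
    (Iic_disjoint_Ioc le_rfl) measurableSet_Iic
    (Iic_union_Ioc_eq_Iic (by exact_mod_cast hqr)).symm

lemma iInf_tail (h : Hyp μ) (k : ℕ) :
    ⨅ n : ℕ, (μ (k:ℝ≥0) : Measure ℝ) (Ioi ((n:ℚ):ℝ)) = 0 := by
  have hiter : ⋂ n : ℕ, Ioi (((n:ℚ):ℝ)) = ∅ := by
    ext x
    simp only [mem_iInter, mem_Ioi, mem_empty_iff_false, iff_false, not_forall, not_lt]
    obtain ⟨n, hn⟩ := exists_nat_gt x
    exact ⟨n, by push_cast; exact hn.le⟩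
  have := Antitone.measure_iInter (μ := (μ (k:ℝ≥0) : Measure ℝ))
    (s := fun n : ℕ => Ioi ((n:ℚ):ℝ))
    (fun n m hnm => Ioi_subset_Ioi (by exact_mod_cast hnm))
    (fun n => measurableSet_Ioi.nullMeasurableSet) ⟨0, measure_ne_top _ _⟩
  rw [hiter] at this
  simp only [measure_empty] at this
  exact this.symm

lemma sup_rhoq (h : Hyp μ) (k : ℕ) {E : Set ℝ} (hE : E ⊆ Ioc (-(k:ℝ)) k) :
    (⨆ n : ℕ, rhoq h (n:ℚ) E) = rho h E := by
  refine le_antisymm (iSup_le fun n => Measure.le_iff'.mp (rhoq_le_rho h _) E) ?_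
  have hstep : ∀ n : ℕ, rho h E ≤ (⨆ m : ℕ, rhoq h (m:ℚ) E)
      + (μ (k:ℝ≥0) : Measure ℝ) (Ioi ((n:ℚ):ℝ)) := by
    intro n
    rw [rho_decomp h (n:ℚ), Measure.add_apply]
    refine add_le_add (le_iSup (fun m : ℕ => rhoq h (m:ℚ) E) n) ?_
    refine le_trans (measure_mono hE) ?_
    exact le_of_eq (SF_measure_Ioc_nat h _ k)
  have := le_iInf hstep
  rwa [← ENNReal.add_iInf, iInf_tail h k, add_zero] at this

lemma rnD_sup (h : Hyp μ) : ∀ᵐ t ∂(rho h), (⨆ n : ℕ, rnD h (n:ℚ) t) = 1 := by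
  apply ae_of_ae_restrict_Ioc
  intro k
  refine ae_eq_of_forall_setLIntegral_eq_of_sigmaFinite₀
    ((Measurable.iSup (fun n : ℕ => rnD_measurable h (n:ℚ))).aemeasurable)
    aemeasurable_const (fun s hs hfin => ?_)
  rw [Measure.restrict_restrict hs]
  calc ∫⁻ x in s ∩ Ioc (-(k:ℝ)) k, (⨆ n : ℕ, rnD h (n:ℚ) x) ∂(rho h)
      = ⨆ n : ℕ, ∫⁻ x in s ∩ Ioc (-(k:ℝ)) k, rnD h (n:ℚ) x ∂(rho h) := by
        refine lintegral_iSup' (fun n => (rnD_measurable h _).aemeasurable.restrict) ?_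
        filter_upwards [ae_restrict_of_ae (rnD_mono h)] with x hx
        exact fun n m hnm => hx _ _ (by exact_mod_cast hnm)
    _ = ⨆ n : ℕ, rhoq h (n:ℚ) (s ∩ Ioc (-(k:ℝ)) k) := by simp_rw [setInt]
    _ = rho h (s ∩ Ioc (-(k:ℝ)) k) := sup_rhoq h k inter_subset_right
    _ = ∫⁻ _ in s ∩ Ioc (-(k:ℝ)) k, (1:ℝ≥0∞) ∂(rho h) := by rw [setLIntegral_one]

lemma rnD_inf_bot (h : Hyp μ) : ∀ᵐ t ∂(rho h), (⨅ n : ℕ, rnD h (-(n:ℚ)) t) = 0 := by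
  apply ae_of_ae_restrict_Ioc
  intro k
  have hmeas : Measurable fun t => ⨅ n : ℕ, rnD h (-(n:ℚ)) t :=
    Measurable.iInf fun n => rnD_measurable h _
  have hint : ∫⁻ x in Ioc (-(k:ℝ)) k, (⨅ n : ℕ, rnD h (-(n:ℚ)) x) ∂(rho h) = 0 := by
    refine le_antisymm ?_ (zero_le ..)
    have h1 : ∀ n : ℕ, ∫⁻ x in Ioc (-(k:ℝ)) k, (⨅ m : ℕ, rnD h (-(m:ℚ)) x) ∂(rho h)
        ≤ (μ (k:ℝ≥0) : Measure ℝ) (Iic ((-(n:ℚ):ℚ):ℝ)) := by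
      intro n
      refine le_trans (lintegral_mono fun x => iInf_le _ n) ?_
      rw [setInt]
      refine le_trans (measure_mono (Ioc_subset_Iic_self)) ?_
      rw [show Iic (k:ℝ) = Iic ((k:ℝ)) from rfl]
      rw [show rhoq h (-(n:ℚ)) = (SF h (measurableSet_Iic :
        MeasurableSet (Iic ((-(n:ℚ):ℚ):ℝ)))).measure from rfl]
      rw [SF_measure_Iic]
      have hk : (k:ℝ).toNNReal = (k:ℝ≥0) := by simp
      rw [hk]
    have h2 : (⨅ n : ℕ, (μ (k:ℝ≥0) : Measure ℝ) (Iic ((-(n:ℚ):ℚ):ℝ))) = 0 := by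
      have hiter : ⋂ n : ℕ, Iic ((-(n:ℚ):ℚ):ℝ) = ∅ := by
        ext x
        simp only [mem_iInter, mem_Iic, mem_empty_iff_false, iff_false, not_forall, not_le]
        obtain ⟨n, hn⟩ := exists_nat_gt (-x)
        exact ⟨n, by push_cast; linarith⟩
      have := Antitone.measure_iInter (μ := (μ (k:ℝ≥0) : Measure ℝ))
        (s := fun n : ℕ => Iic ((-(n:ℚ):ℚ):ℝ))
        (fun n m hnm => Iic_subset_Iic.mpr (by push_cast; exact_mod_cast neg_le_neg (by exact_mod_cast hnm)))
        (fun n => measurableSet_Iic.nullMeasurableSet) ⟨0, measure_ne_top _ _⟩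
      rw [hiter] at this
      simp only [measure_empty] at this
      exact this.symm
    calc ∫⁻ x in Ioc (-(k:ℝ)) k, (⨅ m : ℕ, rnD h (-(m:ℚ)) x) ∂(rho h)
        ≤ ⨅ n : ℕ, (μ (k:ℝ≥0) : Measure ℝ) (Iic ((-(n:ℚ):ℚ):ℝ)) := le_iInf h1
      _ = 0 := h2
  have h0 : (fun t => ⨅ n : ℕ, rnD h (-(n:ℚ)) t)
      =ᵐ[(rho h).restrict (Ioc (-(k:ℝ)) k)] 0 := (lintegral_eq_zero_iff hmeas).mp hint
  filter_upwards [h0] with x hx using hx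

lemma rnD_iInf_gt (h : Hyp μ) (q : ℚ) :
    ∀ᵐ t ∂(rho h), (⨅ r : Ioi q, rnD h (r:ℚ) t) = rnD h q t := by
  haveI : Nonempty (Ioi q) := ⟨⟨q+1, lt_add_one q⟩⟩
  have dir1 : ∀ᵐ t ∂(rho h), rnD h q t ≤ ⨅ r : Ioi q, rnD h (r:ℚ) t := by
    filter_upwards [rnD_mono h] with t ht
    exact le_iInf fun r => ht q r (le_of_lt r.2)
  apply ae_of_ae_restrict_Ioc
  intro k
  have dir2 : (fun t => ⨅ r : Ioi q, rnD h (r:ℚ) t)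
      ≤ᵐ[(rho h).restrict (Ioc (-(k:ℝ)) k)] rnD h q := by
    refine ae_le_of_forall_setLIntegral_le_of_sigmaFinite
      (Measurable.iInf fun r => rnD_measurable h _) (fun s hs _ => ?_)
    rw [Measure.restrict_restrict hs]
    set E := s ∩ Ioc (-(k:ℝ)) k with hE
    have hmid : ∀ r : Ioi q, rhoq h (r:ℚ) E
        ≤ rhoq h q E + (μ (k:ℝ≥0) : Measure ℝ) (Ioc (q:ℝ) ((r:ℚ):ℝ)) := by
      intro r
      rw [rhoq_decomp h (le_of_lt r.2), Measure.add_apply]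
      refine add_le_add le_rfl ?_
      refine le_trans (measure_mono (inter_subset_right)) ?_
      exact le_of_eq (SF_measure_Ioc_nat h _ k)
    have hinf0 : (⨅ r : Ioi q, (μ (k:ℝ≥0) : Measure ℝ) (Ioc (q:ℝ) ((r:ℚ):ℝ))) = 0 := by
      have hiter : ⋂ r : Ioi q, Ioc (q:ℝ) ((r:ℚ):ℝ) = ∅ := by
        ext x
        simp only [mem_iInter, mem_Ioc, mem_empty_iff_false, iff_false, not_forall]
        by_cases hx : (q:ℝ) < x
        · obtain ⟨r, hr1, hr2⟩ := exists_rat_btwn hx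
          exact ⟨⟨r, by exact_mod_cast hr1⟩, fun hc => absurd hc.2 (not_le.mpr hr2)⟩
        · exact ⟨⟨q+1, lt_add_one q⟩, fun hc => absurd hc.1 hx⟩
      have := Directed.measure_iInter (μ := (μ (k:ℝ≥0) : Measure ℝ))
        (s := fun r : Ioi q => Ioc (q:ℝ) ((r:ℚ):ℝ))
        (fun r => measurableSet_Ioc.nullMeasurableSet)
        (fun r1 r2 => ⟨⟨min r1 r2, lt_min (show q < (r1:ℚ) from r1.2) (show q < (r2:ℚ) from r2.2)⟩,
          Ioc_subset_Ioc_right (by exact_mod_cast min_le_left (r1:ℚ) r2),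
          Ioc_subset_Ioc_right (by exact_mod_cast min_le_right (r1:ℚ) r2)⟩)
        ⟨⟨q+1, lt_add_one q⟩, measure_ne_top _ _⟩
      rw [hiter] at this
      simp only [measure_empty] at this
      exact this.symm
    calc ∫⁻ x in E, (⨅ r : Ioi q, rnD h (r:ℚ) x) ∂(rho h)
        ≤ ⨅ r : Ioi q, rhoq h (r:ℚ) E := by
          refine le_iInf fun r => ?_
          refine le_trans (lintegral_mono fun x => iInf_le _ r) ?_
          rw [setInt]
      _ ≤ ⨅ r : Ioi q, (rhoq h q E + (μ (k:ℝ≥0) : Measure ℝ) (Ioc (q:ℝ) ((r:ℚ):ℝ))) :=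
          le_iInf fun r => (iInf_le _ r).trans (hmid r)
      _ = rhoq h q E + ⨅ r : Ioi q, (μ (k:ℝ≥0) : Measure ℝ) (Ioc (q:ℝ) ((r:ℚ):ℝ)) :=
          (ENNReal.add_iInf).symm
      _ = rhoq h q E := by rw [hinf0, add_zero]
      _ = ∫⁻ x in E, rnD h q x ∂(rho h) := (setInt h q E).symm
  filter_upwards [ae_restrict_of_ae dir1, dir2] with t h1 h2
  exact le_antisymm h2 h1

/-- The rational CDF candidate. -/
noncomputable def f (h : Hyp μ) : ℝ → ℚ → ℝ := fun t q => (rnD h q t).toReal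

lemma f_measurable (h : Hyp μ) : Measurable (f h) :=
  measurable_pi_lambda _ fun q => (rnD_measurable h q).ennreal_toReal

lemma ae_isRatStieltjesPoint (h : Hyp μ) :
    ∀ᵐ t ∂(rho h), ProbabilityTheory.IsRatStieltjesPoint (f h) t := by
  have hG5 : ∀ᵐ t ∂(rho h), ∀ q : ℚ, (⨅ r : Ioi q, rnD h (r:ℚ) t) = rnD h q t :=
    ae_all_iff.mpr fun q => rnD_iInf_gt h q
  filter_upwards [rnD_mono h, rnD_le_one h, rnD_sup h, rnD_inf_bot h, hG5]
    with t hmono h1 hsup hbot hinf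
  have hne : ∀ q : ℚ, rnD h q t ≠ ∞ := fun q => ((h1 q).trans_lt ENNReal.one_lt_top).ne
  have hmonof : Monotone (f h t) := fun q r hqr =>
    ENNReal.toReal_mono (hne r) (hmono q r hqr)
  have hle1 : ∀ q : ℚ, f h t q ≤ 1 := fun q => by
    have := ENNReal.toReal_mono (by simp) (h1 q)
    simpa [f] using this
  have hnonneg : ∀ q : ℚ, 0 ≤ f h t q := fun q => ENNReal.toReal_nonneg
  constructor
  · exact hmonof
  · have hbdd : BddAbove (range (f h t)) := ⟨1, forall_mem_range.mpr hle1⟩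
    have htend := tendsto_atTop_ciSup hmonof hbdd
    have hnat : Tendsto (fun n : ℕ => f h t (n:ℚ)) atTop (𝓝 1) := by
      have h1' : Tendsto (fun n : ℕ => rnD h (n:ℚ) t) atTop (𝓝 (1:ℝ≥0∞)) := by
        rw [← hsup]
        exact tendsto_atTop_iSup fun n m hnm => hmono _ _ (by exact_mod_cast hnm)
      have := (ENNReal.tendsto_toReal (by simp : (1:ℝ≥0∞) ≠ ∞)).comp h1'
      simpa [f, Function.comp_def] using this
    have hsup1 : (⨆ q : ℚ, f h t q) = 1 := by
      refine le_antisymm (ciSup_le hle1) ?_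
      exact le_of_tendsto' hnat fun n => le_ciSup hbdd (n:ℚ)
    rwa [hsup1] at htend
  · have hbdd : BddBelow (range (f h t)) := ⟨0, forall_mem_range.mpr hnonneg⟩
    have htend := tendsto_atBot_ciInf hmonof hbdd
    have hnat : Tendsto (fun n : ℕ => f h t (-(n:ℚ))) atTop (𝓝 0) := by
      have h1' : Tendsto (fun n : ℕ => rnD h (-(n:ℚ)) t) atTop (𝓝 (0:ℝ≥0∞)) := by
        rw [← hbot]
        exact tendsto_atTop_iInf fun n m hnm => hmono _ _ (by
          have : (n:ℚ) ≤ (m:ℚ) := by exact_mod_cast hnm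
          linarith)
      have := (ENNReal.tendsto_toReal (by simp : (0:ℝ≥0∞) ≠ ∞)).comp h1'
      simpa [f, Function.comp_def] using this
    have hinf0 : (⨅ q : ℚ, f h t q) = 0 := by
      refine le_antisymm ?_ (le_ciInf hnonneg)
      exact ge_of_tendsto' hnat fun n => ciInf_le hbdd (-(n:ℚ))
    rwa [hinf0] at htend
  · intro q
    haveI : Nonempty (Ioi q) := ⟨⟨q+1, lt_add_one q⟩⟩
    have := ENNReal.toReal_iInf (fun r : Ioi q => hne (r:ℚ))
    rw [hinf q] at this
    exact this.symm

/-- The kernel given by the patched Stieltjes CDF. -/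
noncomputable def ker (h : Hyp μ) : ProbabilityTheory.Kernel ℝ ℝ :=
  { toFun := fun t =>
      (ProbabilityTheory.stieltjesOfMeasurableRat (f h) (f_measurable h) t).measure
    measurable' := ProbabilityTheory.measurable_measure_stieltjesOfMeasurableRat _ }

lemma ker_apply (h : Hyp μ) (t : ℝ) :
    ker h t = (ProbabilityTheory.stieltjesOfMeasurableRat (f h) (f_measurable h) t).measure :=
  rfl

instance (h : Hyp μ) : ProbabilityTheory.IsMarkovKernel (ker h) :=
  ⟨fun t => by
    rw [ker_apply]
    exact ⟨ProbabilityTheory.measure_stieltjesOfMeasurableRat_univ _ _⟩⟩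

lemma ker_ae_eq (h : Hyp μ) (q : ℚ) :
    ∀ᵐ s ∂(rho h), ker h s (Iic (q:ℝ)) = rnD h q s := by
  filter_upwards [ae_isRatStieltjesPoint h, rnD_le_one h] with s hpt h1
  rw [ker_apply, ProbabilityTheory.measure_stieltjesOfMeasurableRat_Iic]
  have h2 : ProbabilityTheory.stieltjesOfMeasurableRat (f h) (f_measurable h) s (q:ℝ)
      = f h s q := by
    rw [ProbabilityTheory.stieltjesOfMeasurableRat_eq,
      ProbabilityTheory.toRatCDF_of_isRatStieltjesPoint hpt]
  rw [h2]
  exact ENNReal.ofReal_toReal ((h1 q).trans_lt ENNReal.one_lt_top).ne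

/-- The candidate measure on `ℝ × ℝ`. -/
noncomputable def nu0 (h : Hyp μ) : Measure (ℝ × ℝ) := rho h ⊗ₘ ker h

lemma nu0_prod_Iic (h : Hyp μ) (T : ℝ) (q : ℚ) :
    nu0 h (Iic T ×ˢ Iic (q:ℝ)) = (μ T.toNNReal : Measure ℝ) (Iic (q:ℝ)) := by
  rw [nu0, Measure.compProd_apply_prod measurableSet_Iic measurableSet_Iic]
  have : ∫⁻ s in Iic T, ker h s (Iic (q:ℝ)) ∂(rho h)
      = ∫⁻ s in Iic T, rnD h q s ∂(rho h) :=
    lintegral_congr_ae (ae_restrict_of_ae (ker_ae_eq h q))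
  rw [this, setInt]
  exact SF_measure_Iic h _ T

lemma nu0_prod_univ (h : Hyp μ) (T : ℝ) :
    nu0 h (Iic T ×ˢ univ) = (μ T.toNNReal : Measure ℝ) univ := by
  rw [nu0, Measure.compProd_apply_prod measurableSet_Iic MeasurableSet.univ]
  have : ∫⁻ s in Iic T, ker h s univ ∂(rho h) = ∫⁻ s in Iic T, 1 ∂(rho h) := by
    refine lintegral_congr_ae (ae_of_all _ fun s => ?_)
    exact measure_univ
  rw [this, setLIntegral_one]
  exact SF_measure_Iic h _ T

/-- any finite measure is determined by rational `Iic`s -/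
lemma measure_Iic_eq_iInf (m : Measure ℝ) [IsFiniteMeasure m] (x : ℝ) :
    m (Iic x) = ⨅ r : {r : ℚ // x < (r:ℝ)}, m (Iic (r:ℝ)) := by
  haveI : Nonempty {r : ℚ // x < (r:ℝ)} := by
    obtain ⟨r, hr⟩ := exists_rat_gt x
    exact ⟨⟨r, hr⟩⟩
  have hiter : ⋂ r : {r : ℚ // x < (r:ℝ)}, Iic ((r:ℚ):ℝ) = Iic x := by
    ext y
    simp only [mem_iInter, mem_Iic]
    constructor
    · intro hy
      by_contra hxy
      push_neg at hxy
      obtain ⟨r, hr1, hr2⟩ := exists_rat_btwn hxy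
      exact absurd (hy ⟨r, hr1⟩) (not_le.mpr hr2)
    · intro hy r
      exact hy.trans (le_of_lt r.2)
  have := Directed.measure_iInter (μ := m)
    (s := fun r : {r : ℚ // x < (r:ℝ)} => Iic ((r:ℚ):ℝ))
    (fun r => measurableSet_Iic.nullMeasurableSet)
    (fun r1 r2 => ⟨⟨min r1 r2, by push_cast; exact lt_min r1.2 r2.2⟩,
      Iic_subset_Iic.mpr (by push_cast; exact min_le_left _ _),
      Iic_subset_Iic.mpr (by push_cast; exact min_le_right _ _)⟩)
    ⟨Classical.arbitrary _, measure_ne_top _ _⟩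
  rw [hiter] at this
  exact this

theorem exists_nu (h : Hyp μ) :
    ∃ ν : Measure (ℝ × ℝ), ∀ T : ℝ, ∀ A : Set ℝ, MeasurableSet A →
      ν (Iic T ×ˢ A) = (μ T.toNNReal : Measure ℝ) A := by
  refine ⟨nu0 h, fun T A hA => ?_⟩
  set m₁ : Measure ℝ := Measure.map Prod.snd ((nu0 h).restrict (Iic T ×ˢ univ)) with hm₁def
  have hm₁ : ∀ B : Set ℝ, MeasurableSet B → m₁ B = nu0 h (Iic T ×ˢ B) := by
    intro B hB
    rw [hm₁def, Measure.map_apply measurable_snd hB,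
      Measure.restrict_apply (hB.preimage measurable_snd)]
    congr 1
    ext ⟨a, b⟩
    simp only [mem_inter_iff, mem_preimage, mem_prod, mem_univ, and_true, mem_Iic]
    tauto
  haveI : IsFiniteMeasure m₁ := by
    constructor
    rw [hm₁ univ MeasurableSet.univ, nu0_prod_univ]
    exact measure_lt_top _ _
  have hIic : ∀ x : ℝ, m₁ (Iic x) = (μ T.toNNReal : Measure ℝ) (Iic x) := by
    intro x
    rw [measure_Iic_eq_iInf m₁ x, measure_Iic_eq_iInf (μ T.toNNReal : Measure ℝ) x]
    refine iInf_congr fun r => ?_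
    rw [hm₁ _ measurableSet_Iic, nu0_prod_Iic]
  have heq : m₁ = (μ T.toNNReal : Measure ℝ) := Measure.ext_of_Iic _ _ hIic
  rw [← hm₁ A hA, heq]

end MPAux

open MPAux in
/-- **Lemma 3.9.** If `μ : [0,∞) → M₊(ℝ^d)` is weakly continuous, nondecreasing and
`μ 0 = 0`, then there is a σ-finite Borel measure `ν` on `[0,∞) × ℝ^d` with
`ν([0,t] × A) = μ_t(A)` for all `t ≥ 0` and Borel `A`. -/
theorem markovian_projection_stmt0 (d : ℕ) (hd : 1 ≤ d)
    (μ : ℝ≥0 → FiniteMeasure (Fin d → ℝ))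
    (h0 : μ 0 = 0)
    (hcont : Continuous μ)
    (hmono : ∀ s t : ℝ≥0, s ≤ t →
      ∀ A : Set (Fin d → ℝ), MeasurableSet A → μ s A ≤ μ t A) :
    ∃ ν : Measure (ℝ≥0 × (Fin d → ℝ)), SigmaFinite ν ∧
      ∀ (t : ℝ≥0) (A : Set (Fin d → ℝ)), MeasurableSet A →
        ν (Set.Iic t ×ˢ A) = (μ t A : ℝ≥0∞) := by
  classical
  set X := Fin d → ℝ with hX
  let e : X → ℝ := MeasureTheory.embeddingReal X
  have he : MeasurableEmbedding e := MeasureTheory.measurableEmbedding_embeddingReal X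
  have hμ0 : (μ 0 : Measure X) = 0 := by rw [h0]; rfl
  -- the pushforward family on ℝ
  let μ' : ℝ≥0 → FiniteMeasure ℝ := fun t =>
    ⟨(μ t : Measure X).map e,
      ⟨by rw [Measure.map_apply he.measurable MeasurableSet.univ]; exact measure_lt_top _ _⟩⟩
  have hμ'coe : ∀ t, (μ' t : Measure ℝ) = (μ t : Measure X).map e := fun t => rfl
  have hyp : Hyp μ' := by
    constructor
    · apply FiniteMeasure.toMeasure_injective
      rw [hμ'coe, hμ0]
      simp
    · have hmeq : ∀ t, (μ' t).mass = (μ t).mass := by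
        intro t
        have : ((μ' t).mass : ℝ≥0∞) = ((μ t).mass : ℝ≥0∞) := by
          rw [FiniteMeasure.ennreal_mass, FiniteMeasure.ennreal_mass, hμ'coe,
            Measure.map_apply he.measurable MeasurableSet.univ]
          simp
        exact_mod_cast this
      simp only [hmeq]
      exact FiniteMeasure.continuous_mass.comp hcont
    · intro s t hst A hA
      rw [hμ'coe, hμ'coe, Measure.map_apply he.measurable hA,
        Measure.map_apply he.measurable hA,
        ← FiniteMeasure.ennreal_coeFn_eq_coeFn_toMeasure,
        ← FiniteMeasure.ennreal_coeFn_eq_coeFn_toMeasure]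
      exact_mod_cast hmono s t hst _ (he.measurable hA)
  obtain ⟨ν₀, hν₀⟩ := exists_nu hyp
  -- the embedding of the product
  have hclosed : Topology.IsClosedEmbedding ((↑) : ℝ≥0 → ℝ) :=
    Isometry.isClosedEmbedding fun _ => congrFun rfl
  have hcoeemb : MeasurableEmbedding ((↑) : ℝ≥0 → ℝ) :=
    hclosed.toIsEmbedding.measurableEmbedding hclosed.isClosed_range.measurableSet
  have hg : MeasurableEmbedding (Prod.map ((↑) : ℝ≥0 → ℝ) e) := hcoeemb.prodMap he
  have hkey : ∀ (t : ℝ≥0) (A : Set X), MeasurableSet A →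
      (ν₀.comap (Prod.map ((↑) : ℝ≥0 → ℝ) e)) (Set.Iic t ×ˢ A) = (μ t A : ℝ≥0∞) := by
    intro t A hA
    rw [hg.comap_apply]
    have himage : (Prod.map ((↑) : ℝ≥0 → ℝ) e) '' (Set.Iic t ×ˢ A)
        = (Icc (0:ℝ) (t:ℝ)) ×ˢ (e '' A) := by
      ext ⟨u, v⟩
      simp only [mem_image, mem_prod, mem_Iic, mem_Icc, Prod.exists]
      constructor
      · rintro ⟨y, x, ⟨hy, hx⟩, heq⟩
        obtain ⟨h1, h2⟩ := Prod.mk.injEq .. ▸ heq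
        refine ⟨?_, x, hx, h2⟩
        subst h1
        exact ⟨y.2, by exact_mod_cast hy⟩
      · rintro ⟨⟨h0u, hut⟩, x, hx, rfl⟩
        exact ⟨⟨u, h0u⟩, x, ⟨by exact_mod_cast hut, hx⟩, rfl⟩
    rw [himage]
    have hB : MeasurableSet (e '' A) := he.measurableSet_image' hA
    -- negative times carry no mass
    have hzero : ν₀ (Iio (0:ℝ) ×ˢ (e '' A)) = 0 := by
      have hsub : Iio (0:ℝ) ×ˢ (e '' A) ⊆ ⋃ n : ℕ, Iic (-(1:ℝ)/(n+1)) ×ˢ (univ : Set ℝ) := by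
        rintro ⟨a, b⟩ ⟨ha, -⟩
        simp only [mem_Iio] at ha
        obtain ⟨n, hn⟩ := exists_nat_ge (1/(-a))
        have hpos : (0:ℝ) < -a := by linarith
        have hn1 : (1:ℝ)/(-a) ≤ (n:ℝ)+1 := hn.trans (by linarith)
        have h1 : (1:ℝ) ≤ ((n:ℝ)+1) * (-a) := by
          rw [div_le_iff₀ hpos] at hn1
          linarith
        have h2 : a ≤ -(1:ℝ)/((n:ℝ)+1) := by
          rw [le_div_iff₀ (by positivity : (0:ℝ) < (n:ℝ)+1)]
          nlinarith
        exact mem_iUnion.mpr ⟨n, by simpa using h2, trivial⟩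
      refine le_antisymm (le_trans (measure_mono hsub) ?_) (zero_le ..)
      refine le_trans (measure_iUnion_le _) ?_
      have hzz : ∀ n : ℕ, ν₀ (Iic (-(1:ℝ)/(n+1)) ×ˢ (univ : Set ℝ)) = 0 := by
        intro n
        rw [hν₀ _ _ MeasurableSet.univ]
        have : (-(1:ℝ)/(n+1)).toNNReal = 0 := by
          apply Real.toNNReal_of_nonpos
          apply div_nonpos_of_nonpos_of_nonneg
          · norm_num
          · positivity
        rw [this, hμ'coe, hμ0]
        simp
      simp [hzz]
    have hsplit : Iic ((t:ℝ)) ×ˢ (e '' A)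
        = (Iio (0:ℝ) ×ˢ (e '' A)) ∪ (Icc (0:ℝ) (t:ℝ)) ×ˢ (e '' A) := by
      rw [← union_prod]
      congr 1
      ext x
      simp only [mem_Iic, mem_union, mem_Iio, mem_Icc]
      constructor
      · intro hx
        rcases lt_or_ge x 0 with hx0 | hx0
        · exact Or.inl hx0
        · exact Or.inr ⟨hx0, hx⟩
      · rintro (hx | ⟨-, hx⟩)
        · exact hx.le.trans t.2
        · exact hx
    have heq1 : ν₀ ((Icc (0:ℝ) (t:ℝ)) ×ˢ (e '' A)) = ν₀ (Iic ((t:ℝ)) ×ˢ (e '' A)) := by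
      refine le_antisymm (measure_mono (prod_mono_left Icc_subset_Iic_self)) ?_
      rw [hsplit]
      refine le_trans (measure_union_le _ _) ?_
      rw [hzero, zero_add]
    rw [heq1, hν₀ _ _ hB, Real.toNNReal_coe, hμ'coe,
      Measure.map_apply he.measurable hB, Set.preimage_image_eq A he.injective,
      ← FiniteMeasure.ennreal_coeFn_eq_coeFn_toMeasure]
  refine ⟨ν₀.comap (Prod.map ((↑) : ℝ≥0 → ℝ) e), ?_, hkey⟩
  refine ⟨⟨⟨fun n => Set.Iic (n : ℝ≥0) ×ˢ (univ : Set X), fun _ => trivial, fun n => ?_, ?_⟩⟩⟩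
  · rw [hkey (n : ℝ≥0) univ MeasurableSet.univ]
    exact ENNReal.coe_lt_top
  · ext ⟨s, x⟩
    simp only [mem_iUnion, mem_prod, mem_Iic, mem_univ, and_true, iff_true]
    exact exists_nat_ge s
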